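/- Let ρ, A, B be positive semidefinite d×d complex matrices with B − A positive semidefinite. Then tr((√ρ A √ρ)^{1/2}) ≤ tr((√ρ B √ρ)^{1/2}); that is, the fidelity F(ρ, ·) is monotone with respect to the Loewner order in its second argument. -/

import Mathlib

open Matrix BigOperators ComplexOrder Classical

/-- The positive semidefinite square root of a matrix (junk value `0` if the
matrix is not positive semidefinite). -/
noncomputable def psqrt {d : ℕ} (A : Matrix (Fin d) (Fin d) ℂ) :
    Matrix (Fin d) (Fin d) ℂ :=
  if h : A.PosSemidef then
    (h.1.eigenvectorUnitary : Matrix (Fin d) (Fin d) ℂ) *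
      diagonal ((↑) ∘ (√·) ∘ h.1.eigenvalues) *
      (star h.1.eigenvectorUnitary : Matrix (Fin d) (Fin d) ℂ)
  else 0

namespace Matrix.PosSemidef

noncomputable def sqrt {d : ℕ} {A : Matrix (Fin d) (Fin d) ℂ} (h : A.PosSemidef) :
    Matrix (Fin d) (Fin d) ℂ :=
  (h.1.eigenvectorUnitary : Matrix (Fin d) (Fin d) ℂ) *
    diagonal ((↑) ∘ (√·) ∘ h.1.eigenvalues) *
    (star h.1.eigenvectorUnitary : Matrix (Fin d) (Fin d) ℂ)

lemma posSemidef_sqrt {d : ℕ} {A : Matrix (Fin d) (Fin d) ℂ} (h : A.PosSemidef) :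
    h.sqrt.PosSemidef := by
  have hD : (diagonal ((↑) ∘ (√·) ∘ h.1.eigenvalues : Fin d → ℂ)).PosSemidef :=
    posSemidef_diagonal_iff.mpr fun i => by simp [Complex.zero_le_real, Real.sqrt_nonneg]
  exact hD.mul_mul_conjTranspose_same (h.1.eigenvectorUnitary : Matrix (Fin d) (Fin d) ℂ)

lemma sqrt_mul_self {d : ℕ} {A : Matrix (Fin d) (Fin d) ℂ} (h : A.PosSemidef) :
    h.sqrt * h.sqrt = A := by
  have hU : star (h.1.eigenvectorUnitary : Matrix (Fin d) (Fin d) ℂ) *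
      (h.1.eigenvectorUnitary : Matrix (Fin d) (Fin d) ℂ) = 1 :=
    Matrix.mem_unitaryGroup_iff'.mp (h.1.eigenvectorUnitary).2
  have hU' : ∀ Z : Matrix (Fin d) (Fin d) ℂ, star (h.1.eigenvectorUnitary : Matrix (Fin d) (Fin d) ℂ) *
      ((h.1.eigenvectorUnitary : Matrix (Fin d) (Fin d) ℂ) * Z) = Z := fun Z => by
    rw [← mul_assoc, hU, one_mul]
  unfold sqrt
  conv_rhs => rw [h.1.spectral_theorem, Unitary.conjStarAlgAut_apply]
  simp only [mul_assoc, hU']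
  rw [← mul_assoc (diagonal _) (diagonal _), diagonal_mul_diagonal]
  congr 3
  funext i
  simp only [Function.comp_apply]
  rw [← Complex.ofReal_mul, Real.mul_self_sqrt (h.eigenvalues_nonneg i)]
  rfl

end Matrix.PosSemidef

lemma trace_re_nonneg {d : ℕ} {P : Matrix (Fin d) (Fin d) ℂ} (hP : P.PosSemidef) :
    0 ≤ P.trace.re := by
  have h : ∀ i, 0 ≤ (P i i).re := fun i => hP.re_dotProduct_nonneg (Pi.single i 1) |>.trans_eq ?_
  · rw [Matrix.trace, Complex.re_sum]
    exact Finset.sum_nonneg fun i _ => h i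
  · simp [dotProduct, mulVec, Pi.single_apply]

set_option maxHeartbeats 1000000 in
lemma exists_RW {d : ℕ} (Y : Matrix (Fin d) (Fin d) ℂ) (hY : Y.PosSemidef) (ε : ℝ) (hε : 0 < ε) :
    ∃ R W : Matrix (Fin d) (Fin d) ℂ, Rᴴ = R ∧ Wᴴ = W ∧ W * R = 1 ∧ R * W = 1 ∧
      (R * R).trace.re = hY.sqrt.trace.re + d * ε ∧
      (W * Y * W).trace.re ≤ hY.sqrt.trace.re := by
  have hS : (hY.sqrt).PosSemidef := hY.posSemidef_sqrt
  set lam : Fin d → ℝ := hS.1.eigenvalues with hlamdef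
  have hlam : ∀ i, 0 ≤ lam i := hS.eigenvalues_nonneg
  have hpos : ∀ i, 0 < lam i + ε := fun i => add_pos_of_nonneg_of_pos (hlam i) hε
  set V : Matrix (Fin d) (Fin d) ℂ := (hS.1.eigenvectorUnitary : Matrix (Fin d) (Fin d) ℂ)
    with hVdef
  have hV1 : V * star V = 1 := Matrix.mem_unitaryGroup_iff.mp (hS.1.eigenvectorUnitary).2
  have hV2 : star V * V = 1 := Matrix.mem_unitaryGroup_iff'.mp (hS.1.eigenvectorUnitary).2
  have hV2' : ∀ Z : Matrix (Fin d) (Fin d) ℂ, star V * (V * Z) = Z := fun Z => by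
    rw [← mul_assoc, hV2, one_mul]
  set Φ : (ℝ → ℝ) → Matrix (Fin d) (Fin d) ℂ :=
    fun f => V * Matrix.diagonal (fun i => ((f (lam i) : ℝ) : ℂ)) * star V with hΦdef
  have hmul : ∀ f g : ℝ → ℝ, Φ f * Φ g = Φ (fun x => f x * g x) := by
    intro f g
    simp only [hΦdef]
    simp only [mul_assoc, hV2']
    rw [← mul_assoc, ← mul_assoc, mul_assoc V, Matrix.diagonal_mul_diagonal, ← mul_assoc]
    congr 2
    funext i
    push_cast
    ring
  have htr : ∀ f : ℝ → ℝ, (Φ f).trace = ∑ i, ((f (lam i) : ℝ) : ℂ) := by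
    intro f
    simp only [hΦdef]
    rw [Matrix.trace_mul_cycle, hV2, one_mul, Matrix.trace_diagonal]
  have hherm : ∀ f : ℝ → ℝ, (Φ f).IsHermitian := by
    intro f
    apply Matrix.isHermitian_mul_mul_conjTranspose
    exact Matrix.isHermitian_diagonal_iff.mpr fun i => by
      simp [_root_.IsSelfAdjoint, Complex.star_def, Complex.conj_ofReal]
  have hone : ∀ h : ℝ → ℝ, (∀ i, h (lam i) = 1) → Φ h = 1 := by
    intro h hh
    have : (fun i => ((h (lam i) : ℝ) : ℂ)) = fun _ => 1 := by funext i; rw [hh i]; norm_num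
    simp only [hΦdef]
    rw [this, Matrix.diagonal_one, mul_one, hV1]
  have hSΦ : hY.sqrt = Φ (fun x => x) := hS.1.spectral_theorem
  have hStr : hY.sqrt.trace.re = ∑ i, lam i := by
    rw [hSΦ, htr (fun x => x), Complex.re_sum]
    simp
  set f : ℝ → ℝ := fun x => Real.sqrt (x + ε) with hfdef
  set g : ℝ → ℝ := fun x => (Real.sqrt (x + ε))⁻¹ with hgdef
  have hf1 : ∀ i, g (lam i) * f (lam i) = 1 := fun i => by
    simp only [hfdef, hgdef]
    exact inv_mul_cancel₀ (Real.sqrt_pos.mpr (hpos i)).ne'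
  have hf2 : ∀ i, f (lam i) * g (lam i) = 1 := fun i => by
    simp only [hfdef, hgdef]
    exact mul_inv_cancel₀ (Real.sqrt_pos.mpr (hpos i)).ne'
  refine ⟨Φ f, Φ g, (hherm f).eq, (hherm g).eq,
    (hmul g f).trans (hone (fun x => g x * f x) hf1),
    (hmul f g).trans (hone (fun x => f x * g x) hf2), ?_, ?_⟩
  · rw [(hmul f f).trans rfl, htr (fun x => f x * f x), Complex.re_sum, hStr]
    have : ∀ i ∈ Finset.univ, ((((f (lam i) * f (lam i) : ℝ)) : ℂ)).re = lam i + ε := by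
      intro i _
      rw [Complex.ofReal_re]
      exact Real.mul_self_sqrt (hpos i).le
    rw [Finset.sum_congr rfl this, Finset.sum_add_distrib]
    simp [mul_comm]
  · have hY2 : Y = Φ (fun x => x * x) := by
      conv_lhs => rw [← hY.sqrt_mul_self, hSΦ, hmul (fun x => x) (fun x => x)]
    have e1 : (Φ g * Y * Φ g).trace = (Φ g * Φ g * Y).trace := Matrix.trace_mul_cycle (Φ g) Y (Φ g)
    have e2 : Φ g * Φ g * Y = Φ (fun x => (g x * g x) * (x * x)) := by
      rw [hY2, hmul g g, hmul (fun x => g x * g x) (fun x => x * x)]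
    rw [e1, e2, htr (fun x => (g x * g x) * (x * x)), Complex.re_sum, hStr]
    apply Finset.sum_le_sum
    intro i _
    rw [Complex.ofReal_re]
    have h1 : g (lam i) * g (lam i) = (lam i + ε)⁻¹ := by
      simp only [hgdef]
      rw [← mul_inv]
      rw [Real.mul_self_sqrt (hpos i).le]
    rw [h1]
    rw [inv_mul_le_iff₀ (hpos i)]
    nlinarith [hlam i, hε]

lemma trace_mul_psd_re_nonneg {d : ℕ} {P Q : Matrix (Fin d) (Fin d) ℂ}
    (hP : P.PosSemidef) (hQ : Q.PosSemidef) : 0 ≤ (P * Q).trace.re := by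
  have h1 : P * Q = P * (hQ.sqrt * hQ.sqrt) := by rw [hQ.sqrt_mul_self]
  have h2 : (P * (hQ.sqrt * hQ.sqrt)).trace = (hQ.sqrt * P * hQ.sqrt).trace := by
    rw [← mul_assoc, Matrix.trace_mul_cycle]
  have h3 : (hQ.sqrt * P * hQ.sqrt).PosSemidef := by
    have := hP.mul_mul_conjTranspose_same hQ.sqrt
    rwa [hQ.posSemidef_sqrt.isHermitian.eq] at this
  rw [h1, h2]
  exact trace_re_nonneg h3

lemma trace_sqrt_mono {d : ℕ} {X Y : Matrix (Fin d) (Fin d) ℂ}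
    (hX : X.PosSemidef) (hY : Y.PosSemidef) (hXY : (Y - X).PosSemidef) :
    hX.sqrt.trace.re ≤ hY.sqrt.trace.re := by
  refine le_of_forall_pos_le_add fun δ hδ => ?_
  have hd : (0:ℝ) < d + 1 := by positivity
  set ε : ℝ := δ / (d + 1) with hεdef
  have hε : 0 < ε := by positivity
  obtain ⟨R, W, hR, hW, hWR, hRW, hRR, hWYW⟩ := exists_RW Y hY ε hε
  set C := hX.sqrt with hCdef
  have hC : C.PosSemidef := hX.posSemidef_sqrt
  have hMH : (R - W * C)ᴴ = R - C * W := by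
    rw [Matrix.conjTranspose_sub, Matrix.conjTranspose_mul, hR, hW, hC.1.eq]
  have h0 : 0 ≤ ((R - W * C) * (R - W * C)ᴴ).trace.re :=
    trace_re_nonneg (Matrix.posSemidef_self_mul_conjTranspose _)
  rw [hMH] at h0
  have hexp : (R - W * C) * (R - C * W) = R * R - R * (C * W) - (W * C * R - W * C * (C * W)) := by
    noncomm_ring
  have t1 : (R * (C * W)).trace = C.trace := by
    rw [← mul_assoc, Matrix.trace_mul_cycle, hWR, one_mul]
  have t2 : (W * C * R).trace = C.trace := by
    rw [Matrix.trace_mul_cycle, hRW, one_mul]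
  have t3 : (W * C * (C * W)).trace = (W * X * W).trace := by
    rw [mul_assoc, ← mul_assoc C C, hX.sqrt_mul_self, ← mul_assoc]
  have h0' : 0 ≤ (R * R).trace.re - 2 * C.trace.re + (W * X * W).trace.re := by
    rw [hexp, Matrix.trace_sub, Matrix.trace_sub, Matrix.trace_sub, t1, t2, t3] at h0
    simp only [Complex.sub_re] at h0
    linarith
  have hstep : (W * X * W).trace.re ≤ (W * Y * W).trace.re := by
    have hdiff : (W * Y * W).trace - (W * X * W).trace = (W * (Y - X) * W).trace := by
      simp only [Matrix.mul_sub, Matrix.sub_mul, Matrix.trace_sub]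
    have hpsd' : (W * (Y - X) * W).PosSemidef := by
      have := hXY.mul_mul_conjTranspose_same W
      rwa [hW] at this
    have := trace_re_nonneg hpsd'
    rw [← hdiff, Complex.sub_re] at this
    linarith
  have hbound : (d:ℝ) * ε ≤ δ := by
    rw [hεdef, mul_div_assoc', div_le_iff₀ hd]
    nlinarith [Nat.cast_nonneg (α := ℝ) d, hδ.le]
  linarith

/-- Monotonicity of the fidelity `F(ρ,·) = tr((√ρ · √ρ)^{1/2})` in its second
argument with respect to the Loewner order. -/
theorem fidelity_monotone_right
    {d : ℕ} (ρ A B : Matrix (Fin d) (Fin d) ℂ)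
    (hρ : ρ.PosSemidef) (hA : A.PosSemidef) (hB : B.PosSemidef)
    (hAB : (B - A).PosSemidef) :
    (psqrt (psqrt ρ * A * psqrt ρ)).trace.re ≤
      (psqrt (psqrt ρ * B * psqrt ρ)).trace.re := by
  have hrw : psqrt ρ = hρ.sqrt := dif_pos hρ
  have hQ : (hρ.sqrt).PosSemidef := hρ.posSemidef_sqrt
  have hQH : (hρ.sqrt)ᴴ = hρ.sqrt := hQ.1
  have hX : (psqrt ρ * A * psqrt ρ).PosSemidef := by
    rw [hrw]
    have := hA.mul_mul_conjTranspose_same hρ.sqrt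
    rwa [hQH] at this
  have hY : (psqrt ρ * B * psqrt ρ).PosSemidef := by
    rw [hrw]
    have := hB.mul_mul_conjTranspose_same hρ.sqrt
    rwa [hQH] at this
  have hXY : (psqrt ρ * B * psqrt ρ - psqrt ρ * A * psqrt ρ).PosSemidef := by
    have h1 : psqrt ρ * B * psqrt ρ - psqrt ρ * A * psqrt ρ
        = psqrt ρ * (B - A) * psqrt ρ := by
      rw [Matrix.mul_sub, Matrix.sub_mul]
    rw [h1, hrw]
    have := hAB.mul_mul_conjTranspose_same hρ.sqrt
    rwa [hQH] at this
  rw [hrw] at hX hY hXY ⊢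
  unfold psqrt
  rw [dif_pos hX, dif_pos hY]
  exact trace_sqrt_mono hX hY hXY
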